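/- For every integer k ≥ 1 and every real parameter t, the polynomial f_t^k(s) = t^{2k-1}(s-1)^{2k} + (t-1)^{2k-1} t^{2k-1} - (t-1)^{2k-1} s^{2k} satisfies f_t^k(s) ≥ 0 for all real s, with equality if and only if s = t. -/

import Mathlib

lemma aux_stmt0 (m : ℕ) (hodd : Odd m) (t s : ℝ) :
    0 ≤ t ^ m * (s - 1) ^ (m + 1) + (t - 1) ^ m * t ^ m - (t - 1) ^ m * s ^ (m + 1) ∧
    (t ^ m * (s - 1) ^ (m + 1) + (t - 1) ^ m * t ^ m - (t - 1) ^ m * s ^ (m + 1) = 0 ↔ s = t) := by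
  set F : ℝ → ℝ := fun x => t ^ m * (x - 1) ^ (m + 1) + (t - 1) ^ m * t ^ m
      - (t - 1) ^ m * x ^ (m + 1) with hF
  have hFt : F t = 0 := by
    simp only [hF, pow_succ]; ring
  have hderiv : ∀ x : ℝ, HasDerivAt F
      (((m : ℝ) + 1) * ((t * (x - 1)) ^ m - ((t - 1) * x) ^ m)) x := by
    intro x
    have h1 : HasDerivAt (fun y : ℝ => (y - 1) ^ (m + 1)) (((m : ℝ) + 1) * (x - 1) ^ m) x := by
      have := ((hasDerivAt_id x).sub_const 1).fun_pow (m + 1)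
      simpa using this
    have h2 : HasDerivAt (fun y : ℝ => y ^ (m + 1)) (((m : ℝ) + 1) * x ^ m) x := by
      simpa using hasDerivAt_pow (m + 1) x
    have := ((h1.const_mul (t ^ m)).add_const ((t - 1) ^ m * t ^ m)).fun_sub
      (h2.const_mul ((t - 1) ^ m))
    exact this.congr_deriv (by rw [mul_pow, mul_pow]; ring)
  have hcont : Continuous F := by fun_prop
  have hmono : StrictMonoOn F (Set.Ici t) := by
    apply strictMonoOn_of_deriv_pos (convex_Ici t) hcont.continuousOn
    intro x hx
    rw [interior_Ici, Set.mem_Ioi] at hx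
    rw [(hderiv x).deriv]
    have h1 : (t - 1) * x < t * (x - 1) := by nlinarith
    have h2 := hodd.strictMono_pow h1
    have hm1 : (0 : ℝ) < (m : ℝ) + 1 := by positivity
    nlinarith
  have hanti : StrictAntiOn F (Set.Iic t) := by
    apply strictAntiOn_of_deriv_neg (convex_Iic t) hcont.continuousOn
    intro x hx
    rw [interior_Iic, Set.mem_Iio] at hx
    rw [(hderiv x).deriv]
    have h1 : t * (x - 1) < (t - 1) * x := by nlinarith
    have h2 := hodd.strictMono_pow h1
    have hm1 : (0 : ℝ) < (m : ℝ) + 1 := by positivity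
    nlinarith
  rcases lt_trichotomy s t with h | h | h
  · have hs : 0 < F s := by
      have := hanti (Set.mem_Iic.2 h.le) (Set.mem_Iic.2 le_rfl) h
      rw [hFt] at this; exact this
    exact ⟨hs.le, by constructor <;> intro h' <;> [exact absurd h' hs.ne'; exact absurd h' h.ne]⟩
  · subst h
    exact ⟨hFt.ge, ⟨fun _ => rfl, fun _ => hFt⟩⟩
  · have hs : 0 < F s := by
      have := hmono (Set.mem_Ici.2 le_rfl) (Set.mem_Ici.2 h.le) h
      rw [hFt] at this; exact this
    exact ⟨hs.le, by constructor <;> intro h' <;> [exact absurd h' hs.ne'; exact absurd h' h.ne']⟩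

/-- For every integer `k ≥ 1` and real `t`, the polynomial
`f_t^k(s) = t^(2k-1)(s-1)^(2k) + (t-1)^(2k-1) t^(2k-1) - (t-1)^(2k-1) s^(2k)`
is nonnegative for all real `s`, with equality iff `s = t`. -/
theorem stmt_0 (k : ℕ) (hk : 1 ≤ k) (t s : ℝ) :
    0 ≤ t ^ (2 * k - 1) * (s - 1) ^ (2 * k) + (t - 1) ^ (2 * k - 1) * t ^ (2 * k - 1)
        - (t - 1) ^ (2 * k - 1) * s ^ (2 * k) ∧
    (t ^ (2 * k - 1) * (s - 1) ^ (2 * k) + (t - 1) ^ (2 * k - 1) * t ^ (2 * k - 1)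
        - (t - 1) ^ (2 * k - 1) * s ^ (2 * k) = 0 ↔ s = t) := by
  have h : 2 * k = (2 * k - 1) + 1 := by omega
  have ho : Odd (2 * k - 1) := ⟨k - 1, by omega⟩
  rw [h]
  exact aux_stmt0 (2 * k - 1) ho t s
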